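/- Let g be a finite-dimensional real Lie algebra, let D̂, D̂' : g → Mat_N be injective matrix representations whose values are trace-free anti-hermitian matrices, and let φ_M, φ'_M : g → (ℂ^N)^n be ℝ-linear maps whose images generate (ℂ^N)^n as a right Mat_N-module. Then the following are equivalent: (i) there exist a ℂ-algebra automorphism φ of Mat_N, a Lie algebra automorphism ψ of g, and a bijective additive map ψ̂ : (ℂ^N)^n → (ℂ^N)^n such that ψ̂(v·A) = ψ̂(v)·φ(A) for all v ∈ (ℂ^N)^n and A ∈ Mat_N, D̂'(∂)φ(A) − φ(A)D̂'(∂) = φ(D̂(ψ(∂))A − A·D̂(ψ(∂))) for all ∂ ∈ g and A ∈ Mat_N, and ψ̂(φ_M(ψ(∂))) = φ'_M(∂) for all ∂ ∈ g; (ii) there exist X ∈ GL(n,ℂ), U ∈ GL(N,ℂ) and a Lie algebra automorphism ψ of g such that D̂'(∂) = U⁻¹·D̂(ψ(∂))·U and φ'_M(∂) = φ_M(ψ(∂))·(X ⊗ U) for all ∂ ∈ g. -/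

import Mathlib

open Matrix Kronecker

/-- The right action of `Mat_N` on `(ℂ^N)^n` (tuples of row vectors). -/
noncomputable def rAct {N n : ℕ} (v : Fin n → Fin N → ℂ) (A : Matrix (Fin N) (Fin N) ℂ) :
    Fin n → Fin N → ℂ :=
  fun i => Matrix.vecMul (v i) A

/-- The right action of `Mat_{nN}` (indexed by `Fin n × Fin N`) on `(ℂ^N)^n`, identifying
`(ℂ^N)^n` with row vectors of length `nN`. -/
noncomputable def kAct {N n : ℕ} (v : Fin n → Fin N → ℂ)
    (B : Matrix (Fin n × Fin N) (Fin n × Fin N) ℂ) : Fin n → Fin N → ℂ :=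
  fun i j => Matrix.vecMul (fun p : Fin n × Fin N => v p.1 p.2) B (i, j)

/-- The image of `f` generates `(ℂ^N)^n` as a right `Mat_N`-module. -/
def Generates {g : Type*} {N n : ℕ} (f : g → (Fin n → Fin N → ℂ)) : Prop :=
  ∀ w : Fin n → Fin N → ℂ, ∃ (m : ℕ) (x : Fin m → g) (A : Fin m → Matrix (Fin N) (Fin N) ℂ),
    w = ∑ t, rAct (f (x t)) (A t)

section Helpers

lemma vecMul_stdBasis' {N : ℕ} (w : Fin N → ℂ) (z k : Fin N) :
    Matrix.vecMul w (Matrix.single z k 1) = fun q => w z * (if q = k then 1 else 0) := by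
  funext q
  by_cases h : q = k
  · subst h
    simp [Matrix.vecMul, dotProduct, Matrix.single, ite_and]
  · simp [Matrix.vecMul, dotProduct, Matrix.single, ite_and, h, Ne.symm h]

lemma flat_kAct {N n : ℕ} (v : Fin n → Fin N → ℂ)
    (B : Matrix (Fin n × Fin N) (Fin n × Fin N) ℂ) :
    (fun p : Fin n × Fin N => kAct v B p.1 p.2)
      = Matrix.vecMul (fun p : Fin n × Fin N => v p.1 p.2) B := by
  funext p; cases p; rfl

lemma kAct_kAct {N n : ℕ} (v : Fin n → Fin N → ℂ)
    (B C : Matrix (Fin n × Fin N) (Fin n × Fin N) ℂ) :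
    kAct (kAct v B) C = kAct v (B * C) := by
  funext i j
  show Matrix.vecMul (fun p : Fin n × Fin N => kAct v B p.1 p.2) C (i, j) = _
  rw [flat_kAct, Matrix.vecMul_vecMul]
  rfl

lemma kAct_one {N n : ℕ} (v : Fin n → Fin N → ℂ) : kAct v 1 = v := by
  funext i j
  show Matrix.vecMul (fun p : Fin n × Fin N => v p.1 p.2) 1 (i, j) = v i j
  rw [Matrix.vecMul_one]

lemma kAct_add {N n : ℕ} (v w : Fin n → Fin N → ℂ)
    (B : Matrix (Fin n × Fin N) (Fin n × Fin N) ℂ) :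
    kAct (v + w) B = kAct v B + kAct w B := by
  funext i j
  show Matrix.vecMul _ B (i, j) = Matrix.vecMul _ B (i, j) + Matrix.vecMul _ B (i, j)
  rw [show (fun p : Fin n × Fin N => (v + w) p.1 p.2)
      = (fun p : Fin n × Fin N => v p.1 p.2) + (fun p : Fin n × Fin N => w p.1 p.2) from rfl,
    Matrix.add_vecMul]
  rfl

lemma rAct_eq_kAct {N n : ℕ} (v : Fin n → Fin N → ℂ) (A : Matrix (Fin N) (Fin N) ℂ) :
    rAct v A = kAct v ((1 : Matrix (Fin n) (Fin n) ℂ) ⊗ₖ A) := by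
  funext i j
  show Matrix.vecMul (v i) A j = Matrix.vecMul _ _ (i, j)
  simp only [Matrix.vecMul, dotProduct, kroneckerMap_apply, Fintype.sum_prod_type,
    Matrix.one_apply]
  rw [Finset.sum_comm]
  simp [Finset.mul_sum, mul_ite, ite_mul, mul_comm]

/-- conjugation algebra automorphism -/
noncomputable def conjAE {N : ℕ} (U : GL (Fin N) ℂ) :
    Matrix (Fin N) (Fin N) ℂ ≃ₐ[ℂ] Matrix (Fin N) (Fin N) ℂ where
  toFun A := (U⁻¹).val * A * U.val
  invFun A := U.val * A * (U⁻¹).val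
  left_inv A := by
    have h1 : U.val * (U⁻¹).val = 1 := U.mul_inv
    have h2 : (U⁻¹).val * U.val = 1 := U.inv_mul
    calc U.val * ((U⁻¹).val * A * U.val) * (U⁻¹).val
        = (U.val * (U⁻¹).val) * A * (U.val * (U⁻¹).val) := by
          simp only [Matrix.mul_assoc]
      _ = A := by rw [h1]; simp
  right_inv A := by
    have h1 : U.val * (U⁻¹).val = 1 := U.mul_inv
    have h2 : (U⁻¹).val * U.val = 1 := U.inv_mul
    calc (U⁻¹).val * (U.val * A * (U⁻¹).val) * U.val
        = ((U⁻¹).val * U.val) * A * ((U⁻¹).val * U.val) := by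
          simp only [Matrix.mul_assoc]
      _ = A := by rw [h2]; simp
  map_mul' A B := by
    have h1 : U.val * (U⁻¹).val = 1 := U.mul_inv
    calc (U⁻¹).val * (A * B) * U.val
        = (U⁻¹).val * A * (U.val * (U⁻¹).val) * B * U.val := by
          rw [h1]; simp [Matrix.mul_assoc]
      _ = ((U⁻¹).val * A * U.val) * ((U⁻¹).val * B * U.val) := by
          simp [Matrix.mul_assoc]
  map_add' A B := by
    simp [Matrix.mul_add, Matrix.add_mul]
  commutes' r := by
    have h2 : (U⁻¹).val * U.val = 1 := U.inv_mul
    show (U⁻¹).val * (algebraMap ℂ (Matrix (Fin N) (Fin N) ℂ) r) * U.val = _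
    rw [Matrix.mul_assoc, Algebra.commutes r (U.val), ← Matrix.mul_assoc, h2, Matrix.one_mul]

/-- a trace-free matrix commuting with everything is zero -/
lemma trace0_central {N : ℕ} (hN : 1 ≤ N) (B : Matrix (Fin N) (Fin N) ℂ)
    (hcomm : ∀ A, B * A = A * B) (htr : B.trace = 0) : B = 0 := by
  obtain ⟨r, hr⟩ := Matrix.mem_range_scalar_of_commute_single
    (M := B) (fun i j _ => (hcomm _).symm)
  have : B.trace = (N : ℂ) * r := by
    rw [← hr]
    simp [Matrix.trace, Matrix.scalar_apply, Matrix.diag, Finset.sum_const, mul_comm]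
  rw [htr] at this
  have hr0 : r = 0 := by
    have hNne : (N : ℂ) ≠ 0 := Nat.cast_ne_zero.mpr (by omega)
    rcases mul_eq_zero.mp this.symm with h | h
    · exact absurd h hNne
    · exact h
  rw [← hr, hr0]
  simp

theorem sn_matrix {N : ℕ} (hN : 1 ≤ N)
    (φ : Matrix (Fin N) (Fin N) ℂ ≃ₐ[ℂ] Matrix (Fin N) (Fin N) ℂ) :
    ∃ U : GL (Fin N) ℂ, ∀ A, φ A = U.val * A * (U⁻¹).val := by
  set z : Fin N := ⟨0, hN⟩
  set E := φ (single z z 1) with hE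
  have hEE : E * E = E := by
    rw [hE, ← _root_.map_mul]
    congr 1
    simp
  have hEne : E ≠ 0 := by
    intro h
    have h0 : (single z z (1:ℂ)) = 0 := by
      apply φ.injective
      rw [← hE, h, map_zero]
    have := congrFun (congrFun h0 z) z
    simp [single] at this
  obtain ⟨p0, k0, hpk⟩ : ∃ p k, E p k ≠ 0 := by
    by_contra h
    push_neg at h
    exact hEne (by ext p k; simpa using h p k)
  set c : Fin N → ℂ := fun j => E j k0 with hc
  have hcne : c ≠ 0 := fun h => hpk (by simpa [hc] using congrFun h p0)
  have hEc : E *ᵥ c = c := by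
    ext j
    have := congrFun (congrFun hEE j) k0
    simpa [mulVec, dotProduct, mul_apply, hc] using this
  set U : Matrix (Fin N) (Fin N) ℂ := fun j l => ((φ (single l z 1)) *ᵥ c) j with hU
  have hmul : ∀ (X : Matrix (Fin N) (Fin N) ℂ) (j l : Fin N),
      (X * U) j l = ((X * φ (single l z 1)) *ᵥ c) j := by
    intro X j l
    rw [Matrix.mul_apply]
    simp only [hU, mul_apply, mulVec, dotProduct, Finset.mul_sum, Finset.sum_mul]
    rw [Finset.sum_comm]
    exact Finset.sum_congr rfl fun m _ => Finset.sum_congr rfl fun q _ => by ring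
  have key0 : ∀ a b, φ (single a b 1) * U = U * single a b 1 := by
    intro a b
    ext j l
    rw [hmul, ← _root_.map_mul]
    by_cases hb : b = l
    · subst hb
      rw [Matrix.single_mul_single_same]
      have : (single a z ((1:ℂ) * 1)) = single a z 1 := by norm_num
      rw [this, Matrix.mul_single_apply_same]
      simp [hU]
    · rw [Matrix.single_mul_single_of_ne (h := hb), map_zero,
        Matrix.mul_single_apply_of_ne (hbj := fun h => hb h.symm)]
      simp
  have key : ∀ A, φ A * U = U * A := by
    intro A
    conv_lhs => rw [matrix_eq_sum_single A]
    conv_rhs => rw [matrix_eq_sum_single A]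
    rw [map_sum, Finset.sum_mul, Finset.mul_sum]
    refine Finset.sum_congr rfl fun a _ => ?_
    rw [map_sum, Finset.sum_mul, Finset.mul_sum]
    refine Finset.sum_congr rfl fun b _ => ?_
    rw [show single a b (A a b) = A a b • single a b (1:ℂ) by
        rw [smul_single, smul_eq_mul, mul_one],
      _root_.map_smul, smul_mul_assoc, mul_smul_comm, key0]
  have hUz : (fun j => U j z) = c := by
    ext j
    simp only [hU]
    rw [← hE, hEc]
  have hinj : ∀ v, U *ᵥ v = 0 → v = 0 := by
    intro v hv
    by_contra hvne
    obtain ⟨k1, hk1⟩ : ∃ k, v k ≠ 0 := by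
      by_contra h; push_neg at h; exact hvne (funext h)
    have hall : ∀ w : Fin N → ℂ, U *ᵥ w = 0 := by
      intro w
      set A : Matrix (Fin N) (Fin N) ℂ := fun p q => if q = k1 then w p * (v k1)⁻¹ else 0 with hA
      have hAv : A *ᵥ v = w := by
        ext p
        simp [hA, mulVec, dotProduct]
        field_simp
      calc U *ᵥ w = U *ᵥ (A *ᵥ v) := by rw [hAv]
        _ = (U * A) *ᵥ v := by rw [← mulVec_mulVec]
        _ = (φ A * U) *ᵥ v := by rw [key]
        _ = (φ A) *ᵥ (U *ᵥ v) := by rw [← mulVec_mulVec]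
        _ = 0 := by rw [hv, mulVec_zero]
    have : c = 0 := by
      rw [← hUz]
      ext j
      have := congrFun (hall (Pi.single z 1)) j
      simpa [mulVec, dotProduct, Pi.single_apply] using this
    exact hcne this
  have hdet : U.det ≠ 0 := by
    intro h
    obtain ⟨v, hvne, hv⟩ := (Matrix.exists_mulVec_eq_zero_iff).mpr h
    exact hvne (hinj v hv)
  refine ⟨Matrix.GeneralLinearGroup.mkOfDetNeZero U hdet, fun A => ?_⟩
  have hUval : (Matrix.GeneralLinearGroup.mkOfDetNeZero U hdet).val = U := rfl
  have hinv : U * ((Matrix.GeneralLinearGroup.mkOfDetNeZero U hdet)⁻¹).val = 1 :=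
    (Matrix.GeneralLinearGroup.mkOfDetNeZero U hdet).mul_inv
  calc φ A = φ A * (U * ((Matrix.GeneralLinearGroup.mkOfDetNeZero U hdet)⁻¹).val) := by
        rw [hinv, mul_one]
    _ = (φ A * U) * ((Matrix.GeneralLinearGroup.mkOfDetNeZero U hdet)⁻¹).val := by
        rw [mul_assoc]
    _ = _ := by rw [key, hUval, mul_assoc]

end Helpers

set_option maxHeartbeats 1600000 in
/-- Real calculi `(Mat_N, g_D, (ℂ^N)^n, φ_M)` and `(Mat_N, g_{D'}, (ℂ^N)^n, φ'_M)`
are isomorphic iff there are `X ∈ GL(n,ℂ)`, `U ∈ GL(N,ℂ)` and a Lie algebra automorphism `ψ` with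
`D̂'(∂) = U⁻¹ D̂(ψ ∂) U` and `φ'_M(∂) = φ_M(ψ ∂) · (X ⊗ U)` for all `∂`. -/
theorem stmt3 {g : Type*} [LieRing g] [LieAlgebra ℝ g] [FiniteDimensional ℝ g]
    {N n : ℕ} (hN : 1 ≤ N)
    (D D' : g →ₗ[ℝ] Matrix (Fin N) (Fin N) ℂ)
    (hDrep : ∀ x y : g, D ⁅x, y⁆ = D x * D y - D y * D x)
    (hD'rep : ∀ x y : g, D' ⁅x, y⁆ = D' x * D' y - D' y * D' x)
    (hDinj : Function.Injective D) (hD'inj : Function.Injective D')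
    (hDtr : ∀ x : g, (D x).trace = 0) (hD'tr : ∀ x : g, (D' x).trace = 0)
    (hDah : ∀ x : g, (D x)ᴴ = -(D x)) (hD'ah : ∀ x : g, (D' x)ᴴ = -(D' x))
    (φM φM' : g →ₗ[ℝ] (Fin n → Fin N → ℂ))
    (hgen : Generates φM) (hgen' : Generates φM') :
    (∃ (φ : Matrix (Fin N) (Fin N) ℂ ≃ₐ[ℂ] Matrix (Fin N) (Fin N) ℂ) (ψ : g ≃ₗ⁅ℝ⁆ g)
        (ψh : (Fin n → Fin N → ℂ) ≃+ (Fin n → Fin N → ℂ)),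
      (∀ (v : Fin n → Fin N → ℂ) (A : Matrix (Fin N) (Fin N) ℂ),
          ψh (rAct v A) = rAct (ψh v) (φ A)) ∧
      (∀ (x : g) (A : Matrix (Fin N) (Fin N) ℂ),
          D' x * φ A - φ A * D' x = φ (D (ψ x) * A - A * D (ψ x))) ∧
      (∀ x : g, ψh (φM (ψ x)) = φM' x))
    ↔ (∃ (X : GL (Fin n) ℂ) (U : GL (Fin N) ℂ) (ψ : g ≃ₗ⁅ℝ⁆ g),
        ∀ x : g, D' x = (U⁻¹).val * D (ψ x) * U.val ∧
          φM' x = kAct (φM (ψ x)) (X.val ⊗ₖ U.val)) := by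
  constructor
  · -- forward direction
    rintro ⟨φ, ψ, ψh, h1, h2, h3⟩
    obtain ⟨U, hUconj⟩ := sn_matrix hN φ
    set V := U.val with hV
    set W := (U⁻¹).val with hW
    have hVW : V * W = 1 := U.mul_inv
    have hWV : W * V = 1 := U.inv_mul
    -- derive the relation for D'
    have hWV' : ∀ B : Matrix (Fin N) (Fin N) ℂ, W * (V * B) = B := fun B => by
      rw [← Matrix.mul_assoc, hWV, Matrix.one_mul]
    have hVW' : ∀ B : Matrix (Fin N) (Fin N) ℂ, V * (W * B) = B := fun B => by
      rw [← Matrix.mul_assoc, hVW, Matrix.one_mul]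
    have hsm : ∀ (c : ℂ) (w : Fin N → ℂ),
        Matrix.vecMul w (c • (1 : Matrix (Fin N) (Fin N) ℂ)) = c • w := by
      intro c w
      funext k
      simp [Matrix.vecMul, dotProduct, Matrix.one_apply, mul_ite, mul_comm]
    have hD'rel : ∀ x : g, D' x = V * D (ψ x) * W := by
      intro x
      have hB : ∀ A, (W * D' x * V - D (ψ x)) * A = A * (W * D' x * V - D (ψ x)) := by
        intro A
        have h := h2 x A
        rw [hUconj A, hUconj _] at h
        have h' := congrArg (fun M => W * M * V) h
        simp only [Matrix.mul_sub, Matrix.sub_mul, Matrix.mul_assoc, hWV, hVW, hWV', hVW',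
          Matrix.mul_one, Matrix.one_mul] at h'
        rw [Matrix.sub_mul, Matrix.mul_sub, sub_eq_sub_iff_sub_eq_sub]
        simp only [Matrix.mul_assoc]
        exact h'
      have htr : (W * D' x * V - D (ψ x)).trace = 0 := by
        rw [Matrix.trace_sub, hDtr, Matrix.trace_mul_cycle, hVW,
          Matrix.one_mul, hD'tr, sub_zero]
      have h0 := trace0_central hN _ hB htr
      have h0' : W * D' x * V = D (ψ x) := by
        rwa [sub_eq_zero] at h0
      calc D' x = (V * W) * D' x * (V * W) := by rw [hVW]; simp
        _ = V * (W * D' x * V) * W := by simp only [Matrix.mul_assoc]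
        _ = V * D (ψ x) * W := by rw [h0']
      done
    -- the intertwiner Θ
    have hψh_smul : ∀ (c : ℂ) (v : Fin n → Fin N → ℂ), ψh (c • v) = c • ψh v := by
      intro c v
      have e1 : rAct v (c • (1 : Matrix (Fin N) (Fin N) ℂ)) = c • v := by
        funext i; rw [show rAct v (c • (1 : Matrix (Fin N) (Fin N) ℂ)) i
          = Matrix.vecMul (v i) (c • 1) from rfl, hsm]; rfl
      have e2 : φ (c • (1 : Matrix (Fin N) (Fin N) ℂ)) = c • 1 := by
        simp
      have := h1 v (c • (1 : Matrix (Fin N) (Fin N) ℂ))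
      rw [e1, e2] at this
      rw [this]
      funext i
      rw [show rAct (ψh v) (c • (1 : Matrix (Fin N) (Fin N) ℂ)) i
          = Matrix.vecMul (ψh v i) (c • 1) from rfl, hsm]
      rfl
    obtain ⟨Θ, hΘapp⟩ : ∃ T : (Fin n → Fin N → ℂ) →ₗ[ℂ] (Fin n → Fin N → ℂ),
        ∀ v i, T v i = Matrix.vecMul (ψh v i) V :=
      ⟨{ toFun := fun v i => Matrix.vecMul (ψh v i) V
         map_add' := by
           intro v w
           funext i
           simp [map_add, Matrix.add_vecMul]
         map_smul' := by
           intro c v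
           funext i
           simp [hψh_smul, Matrix.smul_vecMul] }, fun v i => rfl⟩
    have hΘ : ∀ v A, Θ (rAct v A) = rAct (Θ v) A := by
      intro v A
      funext i
      rw [show rAct (Θ v) A i = Matrix.vecMul (Θ v i) A from rfl, hΘapp, hΘapp, h1 v A, hUconj A]
      show Matrix.vecMul (Matrix.vecMul (ψh v i) (V * A * W)) V = _
      rw [Matrix.vecMul_vecMul, Matrix.vecMul_vecMul, Matrix.mul_assoc (V * A) W V, hWV,
        Matrix.mul_one]
    have hψh_from_Θ : ∀ v, ψh v = fun i => Matrix.vecMul (Θ v i) W := by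
      intro v
      funext i
      rw [hΘapp, Matrix.vecMul_vecMul, hVW, Matrix.vecMul_one]
    have hΘinj : Function.Injective Θ := by
      intro v w hvw
      have : ψh v = ψh w := by
        rw [hψh_from_Θ v, hψh_from_Θ w, hvw]
      exact ψh.injective this
    -- basis analysis
    obtain ⟨z, hz⟩ : ∃ z : Fin N, z = ⟨0, hN⟩ := ⟨_, rfl⟩
    obtain ⟨e, he⟩ : ∃ e : Fin n → Fin N → (Fin n → Fin N → ℂ),
        e = fun i k => Pi.single i (Pi.single k 1) := ⟨_, rfl⟩
    have heRow : ∀ i k i', e i k i' = if i' = i then Pi.single k (1:ℂ) else 0 := by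
      intro i k i'
      simp [he, Pi.single_apply]
    have he_apply : ∀ i k i' k', e i k i' k' =
        (if i' = i then 1 else 0) * (if k' = k then 1 else 0) := by
      intro i k i' k'
      by_cases h1 : i' = i <;> by_cases h2 : k' = k <;>
        simp [he, Pi.single_apply, h1, h2]
    have hF1 : ∀ v : Fin n → Fin N → ℂ, v = ∑ i, ∑ k, v i k • e i k := by
      intro v
      funext i' k'
      simp only [Finset.sum_apply, Pi.smul_apply, smul_eq_mul, he_apply]
      simp [Finset.sum_ite_eq', mul_ite]
    have hF2 : ∀ (i : Fin n) (k : Fin N),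
        rAct (e i z) (single z k 1) = e i k := by
      intro i k
      funext i'
      show Matrix.vecMul (e i z i') (single z k 1) = e i k i'
      rw [heRow, heRow]
      by_cases h : i' = i
      · rw [if_pos h, if_pos h, vecMul_stdBasis']
        funext q
        simp [Pi.single_apply]
      · rw [if_neg h, if_neg h, Matrix.zero_vecMul]
    obtain ⟨X, hX⟩ : ∃ X : Matrix (Fin n) (Fin n) ℂ,
        X = fun i j => Θ (e i z) j z := ⟨_, rfl⟩
    have hF3 : ∀ (i : Fin n) (k : Fin N) (j : Fin n) (q : Fin N),
        Θ (e i k) j q = X i j * (if q = k then 1 else 0) := by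
      intro i k j q
      rw [← hF2 i k, hΘ]
      show Matrix.vecMul (Θ (e i z) j) (single z k 1) q = _
      rw [vecMul_stdBasis', hX]
    have hF4 : ∀ (v : Fin n → Fin N → ℂ) (j : Fin n) (q : Fin N),
        Θ v j q = ∑ i, v i q * X i j := by
      have hΘsum : ∀ v : Fin n → Fin N → ℂ, Θ v = ∑ i, ∑ k, v i k • Θ (e i k) := by
        intro v
        conv_lhs => rw [hF1 v]
        rw [map_sum]
        refine Finset.sum_congr rfl fun i _ => ?_
        rw [map_sum]
        refine Finset.sum_congr rfl fun k _ => ?_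
        exact Θ.map_smul _ _
      intro v j q
      rw [hΘsum v]
      simp only [Finset.sum_apply]
      simp only [Pi.smul_apply, smul_eq_mul]
      simp only [hF3]
      refine Finset.sum_congr rfl fun i _ => ?_
      rw [Finset.sum_eq_single q]
      · simp [mul_comm]
      · intro k _ hk
        simp [Ne.symm hk, hk]
      · simp
    -- X is invertible
    have hXdet : X.det ≠ 0 := by
      intro hdet
      obtain ⟨c, hcne, hc⟩ := Matrix.exists_vecMul_eq_zero_iff.mpr hdet
      obtain ⟨v, hv_apply⟩ : ∃ v : Fin n → Fin N → ℂ,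
          ∀ i q, v i q = c i * (if q = z then 1 else 0) :=
        ⟨fun i q => c i * (if q = z then 1 else 0), fun i q => rfl⟩
      have hΘv : Θ v = 0 := by
        funext j q
        rw [hF4]
        simp only [hv_apply]
        by_cases hq : q = z
        · subst hq
          simp only [if_pos rfl, mul_one]
          have := congrFun hc j
          simpa [Matrix.vecMul, dotProduct] using this
        · simp [hq]
      have hv0 : v = 0 := hΘinj (by rw [hΘv, map_zero])
      apply hcne
      funext i
      have := congrFun (congrFun hv0 i) z
      simpa [hv_apply] using this
    refine ⟨Matrix.GeneralLinearGroup.mkOfDetNeZero X hXdet, U⁻¹, ψ, fun x => ⟨?_, ?_⟩⟩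
    · rw [inv_inv]
      exact hD'rel x
    · -- φM' x = kAct (φM (ψ x)) (X ⊗ₖ W)
      have hψh_kAct : ∀ v : Fin n → Fin N → ℂ, ψh v = kAct v (X ⊗ₖ W) := by
        intro v
        rw [hψh_from_Θ v]
        funext j q
        show Matrix.vecMul (Θ v j) W q = Matrix.vecMul _ _ (j, q)
        simp only [Matrix.vecMul, dotProduct, kroneckerMap_apply, Fintype.sum_prod_type]
        rw [Finset.sum_comm]
        refine Finset.sum_congr rfl fun l _ => ?_
        rw [hF4]
        rw [Finset.sum_mul]
        refine Finset.sum_congr rfl fun i _ => ?_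
        ring
      rw [← h3 x, hψh_kAct]
      rfl
  · -- reverse direction
    rintro ⟨X, U, ψ, hXU⟩
    set V := U.val with hV
    set W := (U⁻¹).val with hW
    have hVW : V * W = 1 := U.mul_inv
    have hWV : W * V = 1 := U.inv_mul
    have hWV' : ∀ B : Matrix (Fin N) (Fin N) ℂ, W * (V * B) = B := fun B => by
      rw [← Matrix.mul_assoc, hWV, Matrix.one_mul]
    have hVW' : ∀ B : Matrix (Fin N) (Fin N) ℂ, V * (W * B) = B := fun B => by
      rw [← Matrix.mul_assoc, hVW, Matrix.one_mul]
    refine ⟨conjAE U, ψ, ?_, ?_, ?_, ?_⟩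
    · exact
      { toFun := fun v => kAct v (X.val ⊗ₖ V)
        invFun := fun v => kAct v ((X⁻¹).val ⊗ₖ W)
        left_inv := by
          intro v
          show kAct (kAct v _) _ = v
          rw [kAct_kAct, ← mul_kronecker_mul, X.mul_inv, hVW, one_kronecker_one, kAct_one]
        right_inv := by
          intro v
          show kAct (kAct v _) _ = v
          rw [kAct_kAct, ← mul_kronecker_mul, X.inv_mul, hWV, one_kronecker_one, kAct_one]
        map_add' := fun v w => kAct_add v w _ }
    · intro v A
      show kAct (rAct v A) (X.val ⊗ₖ V) = rAct (kAct v (X.val ⊗ₖ V)) (conjAE U A)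
      have hφA : conjAE U A = W * A * V := rfl
      rw [hφA, rAct_eq_kAct, rAct_eq_kAct, kAct_kAct, kAct_kAct,
        ← mul_kronecker_mul, ← mul_kronecker_mul, Matrix.one_mul, Matrix.mul_one]
      congr 2
      rw [show V * (W * A * V) = A * V from by
        rw [← Matrix.mul_assoc, ← Matrix.mul_assoc, hVW, Matrix.one_mul]]
    · intro x A
      have hφA : conjAE U A = W * A * V := rfl
      have hφB : conjAE U (D (ψ x) * A - A * D (ψ x)) =
          W * (D (ψ x) * A - A * D (ψ x)) * V := rfl
      rw [hφA, hφB, (hXU x).1]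
      show W * D (ψ x) * V * (W * A * V) - W * A * V * (W * D (ψ x) * V) = _
      simp only [Matrix.mul_sub, Matrix.sub_mul, Matrix.mul_assoc, hVW, hWV, hVW', hWV',
        Matrix.mul_one, Matrix.one_mul]
    · intro x
      show kAct (φM (ψ x)) (X.val ⊗ₖ V) = φM' x
      rw [(hXU x).2]
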